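/- For natural numbers 1 ≤ k ≤ n, define H_{k|n}(p) = p h'_{k|n}(p) / h_{k|n}(p), where h_{k|n}(p) = (1/B(k, n-k+1)) ∫₀^p u^{k-1}(1-u)^{n-k} du is the reliability function of a k-out-of-n system with i.i.d. components. Then 1/H_{k|n}(p) = ∫₀¹ u^{k-1} ((1 - u p)/(1 - p))^{n-k} du for all p ∈ (0,1). -/

import Mathlib

/-- The reliability function of a `k`-out-of-`n` system with i.i.d. components,
where `B = ∫₀¹ u^{k-1}(1-u)^{n-k} du = B(k, n-k+1)` is the Beta function value. -/
noncomputable def koonB (k n : ℕ) : ℝ :=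
  ∫ u in (0:ℝ)..1, u ^ (k - 1) * (1 - u) ^ (n - k)

noncomputable def koonRel (k n : ℕ) (p : ℝ) : ℝ :=
  (1 / koonB k n) * ∫ u in (0:ℝ)..p, u ^ (k - 1) * (1 - u) ^ (n - k)

/-- `H_{k|n}(p) = p h'_{k|n}(p) / h_{k|n}(p)`, with
`h'_{k|n}(p) = p^{k-1}(1-p)^{n-k} / B(k, n-k+1)`. -/
noncomputable def koonH (k n : ℕ) (p : ℝ) : ℝ :=
  p * (p ^ (k - 1) * (1 - p) ^ (n - k) / koonB k n) / koonRel k n p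

theorem inv_H_eq_integral (k n : ℕ) (hk : 1 ≤ k) (hkn : k ≤ n)
    (p : ℝ) (hp : p ∈ Set.Ioo (0 : ℝ) 1) :
    1 / koonH k n p =
      ∫ u in (0:ℝ)..1, u ^ (k - 1) * ((1 - u * p) / (1 - p)) ^ (n - k) := by
  obtain ⟨hp0, hp1⟩ := hp
  have hpne : p ≠ 0 := ne_of_gt hp0
  have h1p : (0:ℝ) < 1 - p := by linarith
  have hB : 0 < koonB k n := by
    apply intervalIntegral.intervalIntegral_pos_of_pos_on
    · exact Continuous.intervalIntegrable (by fun_prop) 0 1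
    · intro x hx
      exact mul_pos (pow_pos hx.1 _) (pow_pos (by linarith [hx.2]) _)
    · norm_num
  have key : (∫ u in (0:ℝ)..1, u ^ (k-1) * (1 - u*p) ^ (n-k)) * p ^ k
      = ∫ u in (0:ℝ)..p, u ^ (k - 1) * (1 - u) ^ (n - k) := by
    have h := intervalIntegral.integral_comp_mul_right
      (a := 0) (b := 1) (fun x => x ^ (k-1) * (1-x)^(n-k)) hpne
    simp only [zero_mul, one_mul] at h
    have hl : (∫ u in (0:ℝ)..1, (u*p) ^ (k-1) * (1 - u*p) ^ (n-k))
        = p ^ (k-1) * ∫ u in (0:ℝ)..1, u ^ (k-1) * (1 - u*p) ^ (n-k) := by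
      rw [← intervalIntegral.integral_const_mul]
      congr 1; ext u; rw [mul_pow]; ring
    rw [hl, smul_eq_mul] at h
    have hpk : p ^ (k-1) * p = p ^ k := by
      conv_rhs => rw [← Nat.sub_add_cancel hk]
      rw [pow_succ]
    have h2 : (∫ x in (0:ℝ)..p, x ^ (k-1) * (1-x)^(n-k))
        = p * (p ^ (k-1) * ∫ u in (0:ℝ)..1, u ^ (k-1) * (1 - u*p) ^ (n-k)) := by
      rw [h]; field_simp
    rw [h2, ← hpk]; ring
  have hrhs : (∫ u in (0:ℝ)..1, u ^ (k - 1) * ((1 - u * p) / (1 - p)) ^ (n - k))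
      = (∫ u in (0:ℝ)..1, u ^ (k-1) * (1 - u*p) ^ (n-k)) / (1-p)^(n-k) := by
    rw [← intervalIntegral.integral_div]
    congr 1; ext u; rw [div_pow]; ring
  rw [koonH, one_div_div, koonRel, ← key, hrhs]
  have hpk : p ^ (k-1) * p = p ^ k := by
    conv_rhs => rw [← Nat.sub_add_cancel hk]
    rw [pow_succ]
  field_simp
  rw [← hpk]; ring_nf; congr 1; congr 1; funext u; ring
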